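/- Fix radii 0 < R₁ < R₂ < R, path-loss exponent α > 0, reader transmit power P_T > 0, noise power 𝒩 > 0, and SINR threshold γ > 0. Suppose the two reflection coefficients satisfy 0 < ξ₂ ≤ 1, ξ₂ ≥ γ·𝒩·R^{2α}/P_T, and ξ₁ ≥ max{ξ₂, γ·(ξ₂ + 𝒩·R₂^{2α}/P_T)} with ξ₁ ≤ 1. Then for every r₁ ∈ [R₁, R₂] and every r₂ ∈ [R₂, R], both P_T·ξ₁·r₁^{−2α} / (P_T·ξ₂·r₂^{−2α} + 𝒩) ≥ γ and P_T·ξ₂·r₂^{−2α}/𝒩 ≥ γ hold; i.e., for the two-node pairing case both paired backscatter nodes are always successfully decoded. -/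

import Mathlib

open Set

/-- Two-node pairing case. Under the reflection-coefficient conditions
`ξ₂ ≥ γ·𝒩·R^{2α}/P_T` and `ξ₁ ≥ max{ξ₂, γ·(ξ₂ + 𝒩·R₂^{2α}/P_T)}`, for every
`r₁ ∈ [R₁, R₂]` and `r₂ ∈ [R₂, R]` both the near node's SINR and the far node's SNR
are at least the threshold `γ`: both paired backscatter nodes are always decoded. -/
theorem backcom_two_node_always_decoded
    (R₁ R₂ R α PT Noise γ ξ₁ ξ₂ : ℝ)
    (h0 : 0 < R₁) (h12 : R₁ < R₂) (h2R : R₂ < R)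
    (hα : 0 < α) (hPT : 0 < PT) (hNoise : 0 < Noise) (hγ : 0 < γ)
    (hξ2pos : 0 < ξ₂) (hξ2le : ξ₂ ≤ 1)
    (hξ2lb : γ * Noise * R ^ (2 * α) / PT ≤ ξ₂)
    (hξ1lb : max ξ₂ (γ * (ξ₂ + Noise * R₂ ^ (2 * α) / PT)) ≤ ξ₁)
    (hξ1le : ξ₁ ≤ 1)
    (r₁ r₂ : ℝ) (hr₁ : r₁ ∈ Set.Icc R₁ R₂) (hr₂ : r₂ ∈ Set.Icc R₂ R) :
    γ ≤ PT * ξ₁ * r₁ ^ (-(2 * α)) / (PT * ξ₂ * r₂ ^ (-(2 * α)) + Noise) ∧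
      γ ≤ PT * ξ₂ * r₂ ^ (-(2 * α)) / Noise := by
  obtain ⟨hr1l, hr1u⟩ := hr₁
  obtain ⟨hr2l, hr2u⟩ := hr₂
  have hR2pos : 0 < R₂ := h0.trans h12
  have hRpos : 0 < R := hR2pos.trans h2R
  have hr1pos : 0 < r₁ := lt_of_lt_of_le h0 hr1l
  have hr2pos : 0 < r₂ := lt_of_lt_of_le hR2pos hr2l
  have hexp : -(2 * α) ≤ 0 := by linarith
  have h1 : R₂ ^ (-(2 * α)) ≤ r₁ ^ (-(2 * α)) :=
    Real.rpow_le_rpow_of_nonpos hr1pos hr1u hexp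
  have h2 : r₂ ^ (-(2 * α)) ≤ R₂ ^ (-(2 * α)) :=
    Real.rpow_le_rpow_of_nonpos hR2pos hr2l hexp
  have h3 : R ^ (-(2 * α)) ≤ r₂ ^ (-(2 * α)) :=
    Real.rpow_le_rpow_of_nonpos hr2pos hr2u hexp
  have hRt : 0 < R ^ (2 * α) := Real.rpow_pos_of_pos hRpos _
  have hR2t : 0 < R₂ ^ (2 * α) := Real.rpow_pos_of_pos hR2pos _
  have hR2nt : 0 < R₂ ^ (-(2 * α)) := Real.rpow_pos_of_pos hR2pos _
  have hcR : R ^ (2 * α) * R ^ (-(2 * α)) = 1 := by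
    rw [Real.rpow_neg hRpos.le]; exact mul_inv_cancel₀ hRt.ne'
  have hcR2 : R₂ ^ (2 * α) * R₂ ^ (-(2 * α)) = 1 := by
    rw [Real.rpow_neg hR2pos.le]; exact mul_inv_cancel₀ hR2t.ne'
  have hξ1lb' : γ * (ξ₂ + Noise * R₂ ^ (2 * α) / PT) ≤ ξ₁ :=
    le_trans (le_max_right _ _) hξ1lb
  have hξ1pos : 0 < ξ₁ := lt_of_lt_of_le hξ2pos (le_trans (le_max_left _ _) hξ1lb)
  have key2 : γ * Noise ≤ PT * ξ₂ * R ^ (-(2 * α)) := by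
    have hξ2lb' : γ * Noise * R ^ (2 * α) ≤ ξ₂ * PT := (div_le_iff₀ hPT).mp hξ2lb
    have h := mul_le_mul_of_nonneg_right hξ2lb'
      (le_of_lt (Real.rpow_pos_of_pos hRpos (-(2 * α))))
    calc γ * Noise = γ * Noise * (R ^ (2 * α) * R ^ (-(2 * α))) := by rw [hcR]; ring
      _ = γ * Noise * R ^ (2 * α) * R ^ (-(2 * α)) := by ring
      _ ≤ ξ₂ * PT * R ^ (-(2 * α)) := h
      _ = PT * ξ₂ * R ^ (-(2 * α)) := by ring
  have key1 : γ * (PT * ξ₂ * R₂ ^ (-(2 * α)) + Noise) ≤ PT * ξ₁ * R₂ ^ (-(2 * α)) := by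
    have hmul := mul_le_mul_of_nonneg_right hξ1lb'
      (le_of_lt (by positivity : (0:ℝ) < PT * R₂ ^ (-(2 * α))))
    have heq : γ * (ξ₂ + Noise * R₂ ^ (2 * α) / PT) * (PT * R₂ ^ (-(2 * α)))
        = γ * (PT * ξ₂ * R₂ ^ (-(2 * α)) + Noise * (R₂ ^ (2 * α) * R₂ ^ (-(2 * α)))) := by
      field_simp
    rw [heq, hcR2, mul_one] at hmul
    calc γ * (PT * ξ₂ * R₂ ^ (-(2 * α)) + Noise) ≤ ξ₁ * (PT * R₂ ^ (-(2 * α))) := hmul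
      _ = PT * ξ₁ * R₂ ^ (-(2 * α)) := by ring
  constructor
  · rw [le_div_iff₀ (by positivity)]
    calc γ * (PT * ξ₂ * r₂ ^ (-(2 * α)) + Noise)
        ≤ γ * (PT * ξ₂ * R₂ ^ (-(2 * α)) + Noise) := by gcongr
      _ ≤ PT * ξ₁ * R₂ ^ (-(2 * α)) := key1
      _ ≤ PT * ξ₁ * r₁ ^ (-(2 * α)) := by gcongr
  · rw [le_div_iff₀ hNoise]
    calc γ * Noise ≤ PT * ξ₂ * R ^ (-(2 * α)) := key2
      _ ≤ PT * ξ₂ * r₂ ^ (-(2 * α)) := by gcongr
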